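/- More generally, if 0 ≤ r_0 < r_1 < r_2 < ... is a strictly increasing sequence of reals with r_n → ∞, {a_n} is bounded, and Σ_{n=0}^∞ a_n e^{-r_n t} = 0 for all t in an interval (0, t₁), then a_n = 0 for all n. -/

import Mathlib

open Complex Filter

open Topology

/-- Uniqueness of generalized Dirichlet series: if `0 ≤ r_0 < r_1 < ⋯ → ∞`, `{a_n}` is bounded,
and `Σ_n a_n e^{-r_n t} = 0` for all `t ∈ (0, t₁)`, then all coefficients vanish. -/
theorem generalized_dirichlet_series_uniqueness (r : ℕ → ℝ)
    (hr0 : 0 ≤ r 0) (hmono : StrictMono r) (hrtop : Tendsto r atTop atTop)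
    (a : ℕ → ℂ) (ha : ∃ C : ℝ, ∀ n, ‖a n‖ ≤ C)
    (t₁ : ℝ) (ht₁ : 0 < t₁)
    (h : ∀ t ∈ Set.Ioo (0 : ℝ) t₁,
      HasSum (fun n : ℕ => a n * Complex.exp (-(r n : ℂ) * (t : ℂ))) 0) :
    ∀ n, a n = 0 := by
  set t0 : ℝ := t₁ / 2 with ht0def
  have ht0 : 0 < t0 := by positivity
  have ht0lt : t0 < t₁ := by rw [ht0def]; linarith
  have hrnn : ∀ n, 0 ≤ r n := fun n => hr0.trans (hmono.monotone (Nat.zero_le n))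
  -- norm of the terms
  have hnorm : ∀ (n : ℕ) (z : ℂ), ‖a n * Complex.exp (-(r n : ℂ) * z)‖
      = ‖a n‖ * Real.exp (-(r n) * z.re) := by
    intro n z
    rw [norm_mul, Complex.norm_exp]
    congr 2
    simp [Complex.mul_re]
  -- summability of norms at t0
  have hsum0 : Summable fun n => ‖a n‖ * Real.exp (-(r n) * t0) := by
    have h1 : Summable fun n : ℕ => a n * Complex.exp (-(r n : ℂ) * (t0 : ℂ)) :=
      (h t0 ⟨ht0, ht0lt⟩).summable
    have h2 := summable_norm_iff.2 h1
    simpa only [hnorm, Complex.ofReal_re] using h2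
  -- summability of norms at any s ≥ t0
  have hsums : ∀ s : ℝ, t0 ≤ s → Summable fun n => ‖a n‖ * Real.exp (-(r n) * s) := by
    intro s hs
    refine Summable.of_nonneg_of_le (fun n => by positivity) (fun n => ?_) hsum0
    have : -(r n) * s ≤ -(r n) * t0 := by nlinarith [hrnn n]
    exact mul_le_mul_of_nonneg_left (Real.exp_le_exp.2 this) (norm_nonneg _)
  -- the sum is differentiable on the half plane Re z > t0
  set U : Set ℂ := {z : ℂ | t0 < z.re} with hUdef
  have hUopen : IsOpen U := isOpen_lt continuous_const Complex.continuous_re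
  have hdiff : DifferentiableOn ℂ
      (fun z : ℂ => ∑' n : ℕ, a n * Complex.exp (-(r n : ℂ) * z)) U := by
    refine differentiableOn_tsum_of_summable_norm hsum0 (fun n => ?_) hUopen
      (fun n z hz => ?_)
    · exact (Differentiable.differentiableOn (by fun_prop))
    · rw [hnorm]
      have hz' : t0 ≤ z.re := le_of_lt hz
      have : -(r n) * z.re ≤ -(r n) * t0 := by nlinarith [hrnn n]
      exact mul_le_mul_of_nonneg_left (Real.exp_le_exp.2 this) (norm_nonneg _)
  have hanal : AnalyticOnNhd ℂ
      (fun z : ℂ => ∑' n : ℕ, a n * Complex.exp (-(r n : ℂ) * z)) U :=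
    hdiff.analyticOnNhd hUopen
  -- the sum vanishes on the real segment (t0, t₁)
  have hzero : ∀ t : ℝ, t0 < t → t < t₁ →
      (∑' n : ℕ, a n * Complex.exp (-(r n : ℂ) * (t : ℂ))) = 0 := by
    intro t h1 h2
    exact (h t ⟨ht0.trans h1, h2⟩).tsum_eq
  -- accumulation point argument: the sum vanishes on all of U
  have hEq : Set.EqOn (fun z : ℂ => ∑' n : ℕ, a n * Complex.exp (-(r n : ℂ) * z)) 0 U := by
    set z₀ : ℂ := (((t0 + t₁) / 2 : ℝ) : ℂ) with hz₀def
    have hz₀U : z₀ ∈ U := by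
      simp only [hUdef, Set.mem_setOf_eq, hz₀def, Complex.ofReal_re]
      linarith
    refine hanal.eqOn_zero_of_preconnected_of_frequently_eq_zero
      ((convex_halfSpace_re_gt t0).isPreconnected) hz₀U ?_
    -- sequence of real points approaching z₀ from the right
    set x : ℕ → ℂ := fun k => (((t0 + t₁) / 2 + (t₁ - t0) / (4 * (k + 1)) : ℝ) : ℂ) with hxdef
    have hxmem : ∀ k : ℕ, x k ≠ z₀ := by
      intro k
      simp only [hxdef, hz₀def, ne_eq, Complex.ofReal_inj]
      have hk : (0 : ℝ) < (t₁ - t0) / (4 * (k + 1)) := div_pos (by linarith) (by positivity)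
      intro hc; linarith [hc]
    have hxtend : Tendsto x atTop (𝓝[≠] z₀) := by
      rw [tendsto_nhdsWithin_iff]
      constructor
      · have hre : Tendsto (fun k : ℕ => ((t0 + t₁) / 2 + (t₁ - t0) / (4 * (k + 1)) : ℝ))
            atTop (𝓝 ((t0 + t₁) / 2)) := by
          have h4 : Tendsto (fun k : ℕ => (t₁ - t0) / (4 * (k + 1)) : ℕ → ℝ) atTop (𝓝 0) := by
            have : Tendsto (fun k : ℕ => (4 * ((k : ℝ) + 1))) atTop atTop := by
              apply Tendsto.const_mul_atTop (by norm_num)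
              exact tendsto_atTop_add_const_right _ _ tendsto_natCast_atTop_atTop
            simpa using Tendsto.div_atTop tendsto_const_nhds this
          simpa using tendsto_const_nhds.add h4
        exact (Complex.continuous_ofReal.tendsto _).comp hre
      · exact Eventually.of_forall fun k => Set.mem_compl_singleton_iff.2 (hxmem k)
    refine hxtend.frequently (Frequently.of_forall fun k => ?_)
    have hk : (0 : ℝ) < (t₁ - t0) / (4 * (k + 1)) := div_pos (by linarith) (by positivity)
    have hk' : (t₁ - t0) / (4 * (k + 1)) ≤ (t₁ - t0) / 4 := by
      apply div_le_div_of_nonneg_left (by linarith) (by norm_num)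
      have hkc : (0 : ℝ) ≤ (k : ℝ) := Nat.cast_nonneg k
      nlinarith
    exact hzero _ (by linarith) (by linarith)
  -- hence the series has sum 0 for ALL real t > t0
  have key : ∀ t : ℝ, t0 < t →
      HasSum (fun n : ℕ => a n * Complex.exp (-(r n : ℂ) * (t : ℂ))) 0 := by
    intro t ht
    have hmem : ((t : ℂ)) ∈ U := by simpa [hUdef] using ht
    have h0 := hEq hmem
    simp only [Pi.zero_apply] at h0
    have hsummable : Summable fun n : ℕ => a n * Complex.exp (-(r n : ℂ) * (t : ℂ)) := by
      rw [← summable_norm_iff]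
      simpa only [hnorm, Complex.ofReal_re] using hsums t ht.le
    have := hsummable.hasSum
    rwa [h0] at this
  -- now the induction
  intro n
  induction n using Nat.strong_induction_on with
  | _ n ih =>
  set τ : ℝ := t0 + 1 with hτdef
  have hτ : t0 < τ := by rw [hτdef]; linarith
  set K : ℝ := ∑' m : ℕ, ‖a m‖ * Real.exp (-(r m) * τ) with hKdef
  have hKsummable := hsums τ hτ.le
  have hKnn : 0 ≤ K := tsum_nonneg fun m => by positivity
  -- the main estimate: for t ≥ τ, ‖a n‖ ≤ K * exp (r (n+1) * τ) * exp (-(r (n+1) - r n) * t)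
  have hest : ∀ t : ℝ, τ ≤ t →
      ‖a n‖ ≤ K * Real.exp (r (n + 1) * τ) * Real.exp (-(r (n + 1) - r n) * t) := by
    intro t ht
    have htt0 : t0 < t := lt_of_lt_of_le hτ ht
    set f : ℕ → ℂ := fun m => a m * Complex.exp (-(r m : ℂ) * (t : ℂ)) with hfdef
    have hf0 : ∀ m < n, f m = 0 := fun m hm => by
      simp [hfdef, ih m hm]
    have hfsum : HasSum f 0 := key t htt0
    -- sum over range (n+1) is f n
    have hrange : ∑ i ∈ Finset.range (n + 1), f i = f n := by
      rw [Finset.sum_range_succ]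
      rw [Finset.sum_eq_zero (fun i hi => hf0 i (Finset.mem_range.1 hi))]
      ring
    have htail : HasSum (fun m => f (m + (n + 1))) (-f n) := by
      rw [hasSum_nat_add_iff (n + 1)]
      rw [hrange]
      simpa using hfsum
    have htailnorm : Summable fun m => ‖f (m + (n + 1))‖ := by
      have : Summable fun m : ℕ => ‖f m‖ := by
        rw [summable_norm_iff]; exact hfsum.summable
      exact this.comp_injective (add_left_injective (n + 1))
    have h1 : ‖f n‖ ≤ ∑' m : ℕ, ‖f (m + (n + 1))‖ := by
      calc ‖f n‖ = ‖-f n‖ := (norm_neg _).symm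
        _ = ‖∑' m : ℕ, f (m + (n + 1))‖ := by rw [htail.tsum_eq]
        _ ≤ ∑' m : ℕ, ‖f (m + (n + 1))‖ := norm_tsum_le_tsum_norm htailnorm
    -- bound each tail term
    have hterm : ∀ m : ℕ, ‖f (m + (n + 1))‖ ≤
        (‖a (m + (n + 1))‖ * Real.exp (-(r (m + (n + 1))) * τ)) *
          Real.exp (-(r (n + 1)) * (t - τ)) := by
      intro m
      have hmono' : r (n + 1) ≤ r (m + (n + 1)) := by
        apply hmono.monotone; omega
      have hre : -(r (m + (n + 1))) * t =
          -(r (m + (n + 1))) * τ + (-(r (m + (n + 1))) * (t - τ)) := by ring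
      rw [hfdef]
      simp only [hnorm, Complex.ofReal_re]
      rw [hre, Real.exp_add, ← mul_assoc]
      apply mul_le_mul_of_nonneg_left _ (by positivity)
      apply Real.exp_le_exp.2
      nlinarith [sub_nonneg.2 ht]
    have h2 : (∑' m : ℕ, ‖f (m + (n + 1))‖) ≤
        K * Real.exp (-(r (n + 1)) * (t - τ)) := by
      have hsumtail : Summable fun m : ℕ =>
          (‖a (m + (n + 1))‖ * Real.exp (-(r (m + (n + 1))) * τ)) *
            Real.exp (-(r (n + 1)) * (t - τ)) := by
        apply Summable.mul_right
        exact hKsummable.comp_injective (add_left_injective (n + 1))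
      calc (∑' m : ℕ, ‖f (m + (n + 1))‖)
          ≤ ∑' m : ℕ, (‖a (m + (n + 1))‖ * Real.exp (-(r (m + (n + 1))) * τ)) *
              Real.exp (-(r (n + 1)) * (t - τ)) :=
            Summable.tsum_le_tsum hterm htailnorm hsumtail
        _ = (∑' m : ℕ, ‖a (m + (n + 1))‖ * Real.exp (-(r (m + (n + 1))) * τ)) *
              Real.exp (-(r (n + 1)) * (t - τ)) := tsum_mul_right
        _ ≤ K * Real.exp (-(r (n + 1)) * (t - τ)) := by
            apply mul_le_mul_of_nonneg_right _ (Real.exp_nonneg _)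
            refine Summable.tsum_le_tsum_of_inj (fun m => m + (n + 1))
              (add_left_injective (n + 1)) (fun c _ => by positivity)
              (fun m => le_refl _)
              (hKsummable.comp_injective (add_left_injective (n + 1))) hKsummable
    have h3 : ‖a n‖ * Real.exp (-(r n) * t) ≤ K * Real.exp (-(r (n + 1)) * (t - τ)) := by
      have : ‖f n‖ = ‖a n‖ * Real.exp (-(r n) * t) := by
        rw [hfdef]; simp only [hnorm, Complex.ofReal_re]
      rw [← this]
      exact h1.trans h2
    have hexp : (0 : ℝ) < Real.exp (-(r n) * t) := Real.exp_pos _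
    rw [← mul_le_mul_iff_of_pos_right hexp]
    calc ‖a n‖ * Real.exp (-(r n) * t) ≤ K * Real.exp (-(r (n + 1)) * (t - τ)) := h3
      _ = K * Real.exp (r (n + 1) * τ) * Real.exp (-(r (n + 1) - r n) * t) *
            Real.exp (-(r n) * t) := by
          rw [mul_assoc, mul_assoc, ← Real.exp_add, ← Real.exp_add]
          ring_nf
  -- let t → ∞
  have hδ : 0 < r (n + 1) - r n := sub_pos.2 (hmono (Nat.lt_succ_self n))
  have htend : Tendsto (fun t : ℝ => K * Real.exp (r (n + 1) * τ) *
      Real.exp (-(r (n + 1) - r n) * t)) atTop (𝓝 0) := by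
    have h1 : Tendsto (fun t : ℝ => (r (n + 1) - r n) * t) atTop atTop :=
      Tendsto.const_mul_atTop hδ tendsto_id
    have h2 : Tendsto (fun t : ℝ => Real.exp (-((r (n + 1) - r n) * t))) atTop (𝓝 0) :=
      Real.tendsto_exp_neg_atTop_nhds_zero.comp h1
    have h4 : Tendsto (fun t : ℝ => K * Real.exp (r (n + 1) * τ) *
        Real.exp (-((r (n + 1) - r n) * t))) atTop
        (𝓝 (K * Real.exp (r (n + 1) * τ) * 0)) := h2.const_mul _
    rw [mul_zero] at h4
    simpa only [neg_mul] using h4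
  have hle : ‖a n‖ ≤ 0 := by
    refine ge_of_tendsto htend ?_
    filter_upwards [eventually_ge_atTop τ] with t ht using hest t ht
  have := norm_nonneg (a n)
  have : ‖a n‖ = 0 := le_antisymm hle this
  exact norm_eq_zero.1 this
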